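/- Let A be an n×n real positive definite matrix and let 1 < p < n. Let J be a uniformly random subset of {1,…,n} of size p with column selector S = S_J. Then E[P_{A^{1/2}S}] ⪰ (p/n) · ( ((p−1)/(n−1)) I_n + (1 − (p−1)/(n−1)) A^{−1/2} diag(A) A^{−1/2} )⁻¹ in the positive semidefinite order, where diag(A) is the diagonal matrix containing the diagonal entries of A. -/

import Mathlib

open scoped BigOperators Matrix

noncomputable section

/-- `B` is the Moore–Penrose pseudoinverse of `A`. -/
def IsMoorePenrose {m n : ℕ} (A : Matrix (Fin m) (Fin n) ℝ) (B : Matrix (Fin n) (Fin m) ℝ) : Prop :=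
  A * B * A = A ∧ B * A * B = B ∧ (A * B)ᵀ = A * B ∧ (B * A)ᵀ = B * A

open Classical in
/-- The Moore–Penrose pseudoinverse (it always exists and is unique). -/
def pinv {m n : ℕ} (A : Matrix (Fin m) (Fin n) ℝ) : Matrix (Fin n) (Fin m) ℝ :=
  if h : ∃ B, IsMoorePenrose A B then h.choose else 0

/-- The orthogonal projector `P_M = M(MᵀM)†Mᵀ` onto the column space of `M`. -/
def proj {m n : ℕ} (M : Matrix (Fin m) (Fin n) ℝ) : Matrix (Fin m) (Fin m) ℝ :=
  M * pinv (Mᵀ * M) * Mᵀ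

/-- The column selector matrix of an index set `J` of size `p`. -/
def selector {n : ℕ} (p : ℕ) (J : Finset (Fin n)) : Matrix (Fin n) (Fin p) ℝ :=
  if h : J.card = p then
    Matrix.of fun i j => if i = ((J.orderIsoOfFin h j : { x // x ∈ J }) : Fin n) then (1 : ℝ) else 0
  else 0

/-- The square root of a positive semidefinite matrix, as the former `Matrix.PosSemidef.sqrt`. -/
def Matrix.PosSemidef.sqrt {n : ℕ} {A : Matrix (Fin n) (Fin n) ℝ} (hA : A.PosSemidef) :
    Matrix (Fin n) (Fin n) ℝ :=
  hA.isHermitian.eigenvectorUnitary.1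
    * Matrix.diagonal (fun i => Real.sqrt (hA.isHermitian.eigenvalues i))
    * (star hA.isHermitian.eigenvectorUnitary : Matrix (Fin n) (Fin n) ℝ)

namespace Stmt15Aux

open Matrix Finset

/-- Uniqueness of the Moore–Penrose pseudoinverse. -/
theorem mp_unique {m k : ℕ} {A : Matrix (Fin m) (Fin k) ℝ} {B₁ B₂ : Matrix (Fin k) (Fin m) ℝ}
    (h1 : IsMoorePenrose A B₁) (h2 : IsMoorePenrose A B₂) : B₁ = B₂ := by
  obtain ⟨a1, a2, a3, a4⟩ := h1
  obtain ⟨b1, b2, b3, b4⟩ := h2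
  have hAB : A * B₁ = A * B₂ := by
    calc A * B₁ = (A * B₁)ᵀ := a3.symm
    _ = B₁ᵀ * Aᵀ := transpose_mul _ _
    _ = B₁ᵀ * (A * B₂ * A)ᵀ := by rw [b1]
    _ = B₁ᵀ * (Aᵀ * (A * B₂)ᵀ) := by rw [transpose_mul]
    _ = (B₁ᵀ * Aᵀ) * (A * B₂)ᵀ := by rw [Matrix.mul_assoc]
    _ = (A * B₁)ᵀ * (A * B₂)ᵀ := by rw [← transpose_mul]
    _ = (A * B₁) * (A * B₂) := by rw [a3, b3]
    _ = A * (B₁ * (A * B₂)) := Matrix.mul_assoc _ _ _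
    _ = A * ((B₁ * A) * B₂) := by rw [← Matrix.mul_assoc B₁ A B₂]
    _ = (A * (B₁ * A)) * B₂ := (Matrix.mul_assoc _ _ _).symm
    _ = ((A * B₁) * A) * B₂ := by rw [← Matrix.mul_assoc A B₁ A]
    _ = A * B₂ := by rw [a1]
  have hBA : B₁ * A = B₂ * A := by
    calc B₁ * A = (B₁ * A)ᵀ := a4.symm
    _ = Aᵀ * B₁ᵀ := transpose_mul _ _
    _ = (A * (B₂ * A))ᵀ * B₁ᵀ := by rw [← Matrix.mul_assoc A B₂ A, b1]
    _ = ((B₂ * A)ᵀ * Aᵀ) * B₁ᵀ := by rw [transpose_mul]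
    _ = ((B₂ * A) * Aᵀ) * B₁ᵀ := by rw [b4]
    _ = (B₂ * A) * (Aᵀ * B₁ᵀ) := Matrix.mul_assoc _ _ _
    _ = (B₂ * A) * (B₁ * A)ᵀ := by rw [← transpose_mul]
    _ = (B₂ * A) * (B₁ * A) := by rw [a4]
    _ = B₂ * (A * (B₁ * A)) := Matrix.mul_assoc _ _ _
    _ = B₂ * ((A * B₁) * A) := by rw [← Matrix.mul_assoc A B₁ A]
    _ = B₂ * A := by rw [a1]
  calc B₁ = B₁ * A * B₁ := a2.symm
  _ = (B₂ * A) * B₁ := by rw [hBA]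
  _ = B₂ * (A * B₁) := Matrix.mul_assoc _ _ _
  _ = B₂ * (A * B₂) := by rw [hAB]
  _ = B₂ * A * B₂ := (Matrix.mul_assoc _ _ _).symm
  _ = B₂ := b2

/-- Existence of the Moore–Penrose pseudoinverse of a real symmetric matrix. -/
theorem exists_mp_hermitian {k : ℕ} {G : Matrix (Fin k) (Fin k) ℝ} (hG : G.IsHermitian) :
    ∃ B, IsMoorePenrose G B := by
  set U : Matrix (Fin k) (Fin k) ℝ := (hG.eigenvectorUnitary : Matrix (Fin k) (Fin k) ℝ) with hU
  have hU2 : star U * U = 1 := Matrix.mem_unitaryGroup_iff'.mp hG.eigenvectorUnitary.2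
  set d : Fin k → ℝ := hG.eigenvalues with hd
  have hspec : G = U * Matrix.diagonal d * star U := by
    have h := hG.spectral_theorem
    simpa using h
  set conj : (Fin k → ℝ) → Matrix (Fin k) (Fin k) ℝ :=
    fun e => U * Matrix.diagonal e * star U with hconj
  have hmul : ∀ e f : Fin k → ℝ, conj e * conj f = conj (e * f) := by
    intro e f
    show U * Matrix.diagonal e * star U * (U * Matrix.diagonal f * star U)
        = U * Matrix.diagonal (e * f) * star U
    calc U * Matrix.diagonal e * star U * (U * Matrix.diagonal f * star U)
        = U * Matrix.diagonal e * (star U * U) * (Matrix.diagonal f * star U) := by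
          simp only [Matrix.mul_assoc]
    _ = U * Matrix.diagonal e * 1 * (Matrix.diagonal f * star U) := by rw [hU2]
    _ = U * (Matrix.diagonal e * Matrix.diagonal f) * star U := by
          rw [Matrix.mul_one]
          simp only [Matrix.mul_assoc]
    _ = U * Matrix.diagonal (e * f) * star U := by rw [diagonal_mul_diagonal, Pi.mul_def]
  have hstar : star U = Uᵀ := by
    rw [Matrix.star_eq_conjTranspose, conjTranspose_eq_transpose_of_trivial]
  have htr : ∀ e : Fin k → ℝ, (conj e)ᵀ = conj e := by
    intro e
    simp only [hconj, hstar, transpose_mul, transpose_transpose, diagonal_transpose,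
      Matrix.mul_assoc]
  have harg1 : d * d⁻¹ * d = d := by
    funext i
    simp only [Pi.mul_apply, Pi.inv_apply]
    rcases eq_or_ne (d i) 0 with h0 | h0
    · simp [h0]
    · field_simp
  have harg2 : d⁻¹ * d * d⁻¹ = d⁻¹ := by
    funext i
    simp only [Pi.mul_apply, Pi.inv_apply]
    rcases eq_or_ne (d i) 0 with h0 | h0
    · simp [h0]
    · field_simp
  refine ⟨conj d⁻¹, ?_, ?_, ?_, ?_⟩
  · rw [hspec]
    show conj d * conj d⁻¹ * conj d = conj d
    rw [hmul, hmul, harg1]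
  · rw [hspec]
    show conj d⁻¹ * conj d * conj d⁻¹ = conj d⁻¹
    rw [hmul, hmul, harg2]
  · rw [hspec]
    show (conj d * conj d⁻¹)ᵀ = conj d * conj d⁻¹
    rw [hmul, htr]
  · rw [hspec]
    show (conj d⁻¹ * conj d)ᵀ = conj d⁻¹ * conj d
    rw [hmul, htr]

theorem pinv_isMP {m k : ℕ} {A : Matrix (Fin m) (Fin k) ℝ} (h : ∃ B, IsMoorePenrose A B) :
    IsMoorePenrose A (pinv A) := by
  rw [pinv, dif_pos h]
  exact h.choose_spec

theorem mp_transpose {k : ℕ} {G B : Matrix (Fin k) (Fin k) ℝ} (hG : Gᵀ = G)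
    (h : IsMoorePenrose G B) : IsMoorePenrose G Bᵀ := by
  obtain ⟨h1, h2, h3, h4⟩ := h
  have e4 : G * Bᵀ = B * G := by
    have := h4
    rw [transpose_mul, hG] at this
    exact this
  have e3 : Bᵀ * G = G * B := by
    have := h3
    rw [transpose_mul, hG] at this
    exact this
  refine ⟨?_, ?_, ?_, ?_⟩
  · calc G * Bᵀ * G = (B * G) * G := by rw [e4]
    _ = ((B * G * G)ᵀ)ᵀ := (transpose_transpose _).symm
    _ = (Gᵀ * (B * G)ᵀ)ᵀ := by rw [transpose_mul (B * G) G]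
    _ = (G * (B * G))ᵀ := by rw [hG, h4]
    _ = (G * B * G)ᵀ := by rw [← Matrix.mul_assoc]
    _ = Gᵀ := by rw [h1]
    _ = G := hG
  · calc Bᵀ * G * Bᵀ = ((Bᵀ * G * Bᵀ)ᵀ)ᵀ := (transpose_transpose _).symm
    _ = ((Bᵀ)ᵀ * (Bᵀ * G)ᵀ)ᵀ := by rw [transpose_mul (Bᵀ * G) Bᵀ]
    _ = (B * (Gᵀ * (Bᵀ)ᵀ))ᵀ := by rw [transpose_mul Bᵀ G, transpose_transpose]
    _ = (B * (G * B))ᵀ := by rw [hG, transpose_transpose]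
    _ = (B * G * B)ᵀ := by rw [← Matrix.mul_assoc]
    _ = Bᵀ := by rw [h2]
  · rw [e4]; exact h4
  · rw [e3]; exact h3

theorem isHermitian_of_transpose {k : ℕ} {G : Matrix (Fin k) (Fin k) ℝ} (hG : Gᵀ = G) :
    G.IsHermitian := by
  show Gᴴ = G
  rwa [conjTranspose_eq_transpose_of_trivial]

/-- The basic properties of the orthogonal projector. -/
theorem proj_spec {m k : ℕ} (M : Matrix (Fin m) (Fin k) ℝ) :
    (proj M)ᵀ = proj M ∧ proj M * M = M ∧ proj M * proj M = proj M := by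
  set G : Matrix (Fin k) (Fin k) ℝ := Mᵀ * M with hGdef
  have hGsym : Gᵀ = G := by rw [hGdef, transpose_mul, transpose_transpose]
  have hex : ∃ B', IsMoorePenrose G B' := exists_mp_hermitian (isHermitian_of_transpose hGsym)
  set B : Matrix (Fin k) (Fin k) ℝ := pinv G with hBdef
  have hBmp : IsMoorePenrose G B := pinv_isMP hex
  have hBsym : Bᵀ = B := mp_unique (mp_transpose hGsym hBmp) hBmp
  obtain ⟨h1, h2, h3, h4⟩ := hBmp
  have ha : Mᵀ * (M * B * G) = G := by
    rw [← Matrix.mul_assoc Mᵀ (M * B) G, ← Matrix.mul_assoc Mᵀ M B, ← hGdef, h1]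
  have hb : (M * B * G)ᵀ * M = G := by
    calc (M * B * G)ᵀ * M = (Gᵀ * (M * B)ᵀ) * M := by rw [transpose_mul (M * B) G]
    _ = (Gᵀ * (Bᵀ * Mᵀ)) * M := by rw [transpose_mul M B]
    _ = Gᵀ * (Bᵀ * (Mᵀ * M)) := by rw [Matrix.mul_assoc, Matrix.mul_assoc]
    _ = G * (B * G) := by rw [hGsym, hBsym, ← hGdef]
    _ = G * B * G := (Matrix.mul_assoc _ _ _).symm
    _ = G := h1
  have hc : (M * B * G)ᵀ * (M * B * G) = G := by
    calc (M * B * G)ᵀ * (M * B * G) = ((M * B * G)ᵀ * M) * (B * G) := by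
          rw [Matrix.mul_assoc ((M * B * G)ᵀ) M (B * G), ← Matrix.mul_assoc M B G]
    _ = G * (B * G) := by rw [hb]
    _ = G * B * G := (Matrix.mul_assoc _ _ _).symm
    _ = G := h1
  have hPM : M * B * G = M := by
    have hz : (M - M * B * G)ᵀ * (M - M * B * G) = 0 := by
      rw [transpose_sub, Matrix.sub_mul, Matrix.mul_sub, Matrix.mul_sub, ← hGdef, ha, hb, hc]
      abel
    have hz' : (M - M * B * G)ᴴ * (M - M * B * G) = 0 := by
      rwa [conjTranspose_eq_transpose_of_trivial]
    have h0 := Matrix.conjTranspose_mul_self_eq_zero.mp hz'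
    exact (sub_eq_zero.mp h0).symm
  have hfact1 : proj M * M = M := by
    show M * B * Mᵀ * M = M
    rw [Matrix.mul_assoc (M * B) (Mᵀ) M, ← hGdef, hPM]
  refine ⟨?_, hfact1, ?_⟩
  · show (M * B * Mᵀ)ᵀ = M * B * Mᵀ
    rw [transpose_mul, transpose_mul, transpose_transpose, hBsym, Matrix.mul_assoc]
  · show (M * B * Mᵀ) * (M * B * Mᵀ) = M * B * Mᵀ
    calc (M * B * Mᵀ) * (M * B * Mᵀ) = M * B * ((Mᵀ * M) * (B * Mᵀ)) := by
          simp only [Matrix.mul_assoc]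
    _ = M * B * (G * (B * Mᵀ)) := by rw [← hGdef]
    _ = M * (B * G * B) * Mᵀ := by simp only [Matrix.mul_assoc]
    _ = M * B * Mᵀ := by rw [h2, Matrix.mul_assoc]

/-- The key pointwise inequality: `P_M ⪰ MW + (MW)ᵀ − Wᵀ(MᵀM)W` for any `W`. -/
theorem proj_sub_posSemidef {m k : ℕ} (M : Matrix (Fin m) (Fin k) ℝ)
    (W : Matrix (Fin k) (Fin m) ℝ) :
    (proj M - (M * W + (M * W)ᵀ - Wᵀ * (Mᵀ * M) * W)).PosSemidef := by
  obtain ⟨hsym, hPM, hPP⟩ := proj_spec M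
  have h := Matrix.posSemidef_conjTranspose_mul_self (proj M - M * W)
  have key : (proj M - M * W)ᴴ * (proj M - M * W)
      = proj M - (M * W + (M * W)ᵀ - Wᵀ * (Mᵀ * M) * W) := by
    rw [conjTranspose_eq_transpose_of_trivial, transpose_sub, Matrix.sub_mul,
      Matrix.mul_sub, Matrix.mul_sub]
    have t1 : (proj M)ᵀ * proj M = proj M := by rw [hsym, hPP]
    have t2 : (proj M)ᵀ * (M * W) = M * W := by
      rw [hsym, ← Matrix.mul_assoc, hPM]
    have hMP : Mᵀ * proj M = Mᵀ := by
      calc Mᵀ * proj M = Mᵀ * (proj M)ᵀ := by rw [hsym]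
      _ = (proj M * M)ᵀ := by rw [← transpose_mul]
      _ = Mᵀ := by rw [hPM]
    have t3 : (M * W)ᵀ * proj M = (M * W)ᵀ := by
      rw [transpose_mul, Matrix.mul_assoc, hMP, ← transpose_mul]
    have t4 : (M * W)ᵀ * (M * W) = Wᵀ * (Mᵀ * M) * W := by
      rw [transpose_mul]
      simp only [Matrix.mul_assoc]
    rw [t1, t2, t3, t4]
    abel
  rw [← key]
  exact h

/-- `S_J S_Jᵀ` is the diagonal indicator matrix of `J`. -/
theorem selector_mul_transpose {n p : ℕ} (J : Finset (Fin n)) (h : J.card = p) :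
    selector p J * (selector p J)ᵀ
      = Matrix.diagonal (fun i => if i ∈ J then (1 : ℝ) else 0) := by
  ext i k
  rw [Matrix.mul_apply]
  simp only [selector, dif_pos h, Matrix.transpose_apply, Matrix.of_apply]
  have step1 : ∑ j : Fin p,
      ((if i = ((J.orderIsoOfFin h j : { x // x ∈ J }) : Fin n) then (1 : ℝ) else 0) *
        (if k = ((J.orderIsoOfFin h j : { x // x ∈ J }) : Fin n) then (1 : ℝ) else 0))
      = ∑ x ∈ J, (if i = x then (1 : ℝ) else 0) * (if k = x then (1 : ℝ) else 0) := by
    rw [← Finset.sum_coe_sort J (fun x => (if i = x then (1 : ℝ) else 0) *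
      (if k = x then (1 : ℝ) else 0))]
    exact Fintype.sum_equiv (J.orderIsoOfFin h).toEquiv _ _ (fun j => rfl)
  rw [step1]
  have step2 : ∀ x ∈ J, (if i = x then (1 : ℝ) else 0) * (if k = x then (1 : ℝ) else 0)
      = if i = x then (if k = x then (1 : ℝ) else 0) else 0 := by
    intro x _
    rcases eq_or_ne i x with h1 | h1 <;> simp [h1]
  rw [Finset.sum_congr rfl step2, Finset.sum_ite_eq J i (fun x => if k = x then (1 : ℝ) else 0)]
  rcases eq_or_ne i k with h2 | h2
  · subst h2
    simp [Matrix.diagonal_apply_eq]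
  · simp [Matrix.diagonal_apply_ne _ h2, h2, Ne.symm h2]

/-- The number of `p`-subsets of `{1,…,n}` containing a fixed `k`-subset `t`. -/
theorem card_subsets_containing {n : ℕ} (p : ℕ) (t : Finset (Fin n)) (htp : t.card ≤ p) :
    ((Finset.powersetCard p (Finset.univ : Finset (Fin n))).filter fun J => t ⊆ J).card
      = (n - t.card).choose (p - t.card) := by
  have hmain : ((Finset.powersetCard p (Finset.univ : Finset (Fin n))).filter fun J => t ⊆ J).card
      = ((Finset.univ \ t).powersetCard (p - t.card)).card := by
    apply Finset.card_bij' (fun J _ => J \ t) (fun K _ => K ∪ t)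
    · intro J hJ
      rw [Finset.mem_filter, Finset.mem_powersetCard] at hJ
      obtain ⟨⟨hJu, hJc⟩, htJ⟩ := hJ
      rw [Finset.mem_powersetCard]
      exact ⟨Finset.sdiff_subset_sdiff hJu (Finset.Subset.refl t),
        by rw [Finset.card_sdiff_of_subset htJ, hJc]⟩
    · intro K hK
      rw [Finset.mem_powersetCard] at hK
      obtain ⟨hKu, hKc⟩ := hK
      have hdisj : Disjoint K t := Finset.disjoint_of_subset_left hKu Finset.sdiff_disjoint
      rw [Finset.mem_filter, Finset.mem_powersetCard]
      refine ⟨⟨Finset.subset_univ _, ?_⟩, Finset.subset_union_right⟩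
      rw [Finset.card_union_of_disjoint hdisj, hKc, Nat.sub_add_cancel htp]
    · intro J hJ
      rw [Finset.mem_filter] at hJ
      exact Finset.sdiff_union_of_subset hJ.2
    · intro K hK
      rw [Finset.mem_powersetCard] at hK
      have hdisj : Disjoint K t := Finset.disjoint_of_subset_left hK.1 Finset.sdiff_disjoint
      exact Finset.union_sdiff_cancel_right hdisj
  rw [hmain, Finset.card_powersetCard, Finset.card_sdiff_of_subset (Finset.subset_univ t),
    Finset.card_univ, Fintype.card_fin]

/-- Nonnegative scalar multiples of positive semidefinite matrices. -/
theorem posSemidef_smul {k : ℕ} {A : Matrix (Fin k) (Fin k) ℝ} (hA : A.PosSemidef) {c : ℝ}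
    (hc : 0 ≤ c) : (c • A).PosSemidef := by
  constructor
  · show (c • A)ᴴ = c • A
    rw [conjTranspose_smul, star_trivial, hA.1.eq]
  · exact (hA.smul hc).2

theorem posDef_smul {k : ℕ} {A : Matrix (Fin k) (Fin k) ℝ} (hA : A.PosDef) {c : ℝ}
    (hc : 0 < c) : (c • A).PosDef := by
  constructor
  · show (c • A)ᴴ = c • A
    rw [conjTranspose_smul, star_trivial, hA.1.eq]
  · exact (hA.smul hc).2

theorem posSemidef_sum {k : ℕ} {ι : Type*} (s : Finset ι) (f : ι → Matrix (Fin k) (Fin k) ℝ)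
    (h : ∀ i ∈ s, (f i).PosSemidef) : (∑ i ∈ s, f i).PosSemidef :=
  Finset.sum_induction f _ (fun _ _ ha hb => ha.add hb) Matrix.PosSemidef.zero h

end Stmt15Aux

open Stmt15Aux Matrix in
/-- For `A` positive definite, `1 < p < n`, and `J` a uniformly random
size-`p` subset of `{1,…,n}` with column selector `S = S_J`,
`E[P_{A^{1/2}S}] ⪰ (p/n)·(((p−1)/(n−1))·I + (1 − (p−1)/(n−1))·A^{−1/2} diag(A) A^{−1/2})⁻¹`. -/
theorem stmt15 (n p : ℕ) (hp : 1 < p) (hpn : p < n)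
    (A : Matrix (Fin n) (Fin n) ℝ) (hA : A.PosDef) :
    (((n.choose p : ℝ))⁻¹ • (∑ J ∈ Finset.powersetCard p Finset.univ,
        proj ((Matrix.PosSemidef.sqrt hA.posSemidef) * selector p J))
      - ((p : ℝ) / n) • ((((p : ℝ) - 1) / ((n : ℝ) - 1)) • (1 : Matrix (Fin n) (Fin n) ℝ)
          + (1 - ((p : ℝ) - 1) / ((n : ℝ) - 1))
              • ((Matrix.PosSemidef.sqrt hA.posSemidef)⁻¹ * Matrix.diagonal A.diag * (Matrix.PosSemidef.sqrt hA.posSemidef)⁻¹))⁻¹).PosSemidef := by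
  classical
  have hn : 1 < n := hp.trans hpn
  set B : Matrix (Fin n) (Fin n) ℝ := hA.posSemidef.sqrt with hBdef
  have hBps : B.PosSemidef := by
    have h := (Matrix.posSemidef_diagonal_iff.mpr (fun i => Real.sqrt_nonneg
      (hA.posSemidef.isHermitian.eigenvalues i))).mul_mul_conjTranspose_same
      (hA.posSemidef.isHermitian.eigenvectorUnitary : Matrix (Fin n) (Fin n) ℝ)
    rw [hBdef, Matrix.PosSemidef.sqrt]
    simpa [Matrix.star_eq_conjTranspose] using h
  have hBB : B * B = A := by
    set U : Matrix (Fin n) (Fin n) ℝ :=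
      (hA.posSemidef.isHermitian.eigenvectorUnitary : Matrix (Fin n) (Fin n) ℝ) with hU
    have hU2 : star U * U = 1 :=
      Matrix.mem_unitaryGroup_iff'.mp hA.posSemidef.isHermitian.eigenvectorUnitary.2
    have hspec : A = U * Matrix.diagonal hA.posSemidef.isHermitian.eigenvalues * star U := by
      have h := hA.posSemidef.isHermitian.spectral_theorem
      simpa using h
    have hBU : B = U * Matrix.diagonal (fun i => Real.sqrt (hA.posSemidef.isHermitian.eigenvalues i))
        * star U := by
      rw [hBdef, Matrix.PosSemidef.sqrt]
    have hdd : Matrix.diagonal (fun i => Real.sqrt (hA.posSemidef.isHermitian.eigenvalues i))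
        * Matrix.diagonal (fun i => Real.sqrt (hA.posSemidef.isHermitian.eigenvalues i))
        = Matrix.diagonal hA.posSemidef.isHermitian.eigenvalues := by
      rw [Matrix.diagonal_mul_diagonal]
      congr 1
      funext i
      exact Real.mul_self_sqrt (hA.posSemidef.eigenvalues_nonneg i)
    rw [hBU]
    calc U * Matrix.diagonal (fun i => Real.sqrt (hA.posSemidef.isHermitian.eigenvalues i))
          * star U * (U * Matrix.diagonal
            (fun i => Real.sqrt (hA.posSemidef.isHermitian.eigenvalues i)) * star U)
        = U * Matrix.diagonal (fun i => Real.sqrt (hA.posSemidef.isHermitian.eigenvalues i))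
          * (star U * U) * (Matrix.diagonal
            (fun i => Real.sqrt (hA.posSemidef.isHermitian.eigenvalues i)) * star U) := by
          simp only [Matrix.mul_assoc]
    _ = U * Matrix.diagonal hA.posSemidef.isHermitian.eigenvalues * star U := by
          rw [hU2, Matrix.mul_one, ← hdd]
          simp only [Matrix.mul_assoc]
    _ = A := hspec.symm
  have hBsym : Bᵀ = B := by
    have h : Bᴴ = B := hBps.1
    rwa [Matrix.conjTranspose_eq_transpose_of_trivial] at h
  have hdetB : IsUnit B.det := by
    have hdd : B.det * B.det = A.det := by rw [← Matrix.det_mul, hBB]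
    have hApos : 0 < A.det := hA.det_pos
    refine isUnit_iff_ne_zero.mpr fun h0 => ?_
    rw [h0, mul_zero] at hdd
    exact hApos.ne hdd
  have hBinv1 : B * B⁻¹ = 1 := Matrix.mul_nonsing_inv _ hdetB
  have hBinv2 : B⁻¹ * B = 1 := Matrix.nonsing_inv_mul _ hdetB
  have hBinvsym : (B⁻¹)ᵀ = B⁻¹ := by rw [Matrix.transpose_nonsing_inv, hBsym]
  -- positivity of the diagonal of A
  have hdiagpos : ∀ i, 0 < A.diag i := by
    intro i
    have hne : (Pi.single i 1 : Fin n → ℝ) ≠ 0 := by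
      intro h0
      have := congrFun h0 i
      simp at this
    have h2 := hA.dotProduct_mulVec_pos hne
    simpa [Matrix.diag] using h2
  set M0 : Matrix (Fin n) (Fin n) ℝ := B⁻¹ * Matrix.diagonal A.diag * B⁻¹ with hM0def
  have hM0ps : M0.PosSemidef := by
    have hDgps : (Matrix.diagonal A.diag).PosSemidef :=
      Matrix.PosSemidef.diagonal (fun i => (hdiagpos i).le)
    have h := hDgps.mul_mul_conjTranspose_same (B⁻¹)
    rwa [Matrix.conjTranspose_eq_transpose_of_trivial, hBinvsym] at h
  have hM0sym : M0ᵀ = M0 := by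
    rw [hM0def, Matrix.transpose_mul, Matrix.transpose_mul, hBinvsym,
      Matrix.diagonal_transpose, Matrix.mul_assoc]
  set c1 : ℝ := ((p : ℝ) - 1) / ((n : ℝ) - 1) with hc1def
  have hpR : (1 : ℝ) < p := by exact_mod_cast hp
  have hnR : (1 : ℝ) < n := by exact_mod_cast hn
  have hpnR : (p : ℝ) < n := by exact_mod_cast hpn
  have hc1pos : 0 < c1 := by
    rw [hc1def]
    apply div_pos <;> linarith
  have hc1lt : c1 < 1 := by
    rw [hc1def, div_lt_one (by linarith)]
    linarith
  set Cmat : Matrix (Fin n) (Fin n) ℝ := c1 • 1 + (1 - c1) • M0 with hCdef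
  have hCpd : Cmat.PosDef := by
    rw [hCdef]
    exact (posDef_smul Matrix.PosDef.one hc1pos).add_posSemidef
      (posSemidef_smul hM0ps (by linarith))
  have hCsym : Cmatᵀ = Cmat := by
    rw [hCdef, Matrix.transpose_add, Matrix.transpose_smul, Matrix.transpose_smul,
      Matrix.transpose_one, hM0sym]
  have hdetC : IsUnit Cmat.det := isUnit_iff_ne_zero.mpr hCpd.det_pos.ne'
  have hCinv1 : Cmat * Cmat⁻¹ = 1 := Matrix.mul_nonsing_inv _ hdetC
  have hCinv2 : Cmat⁻¹ * Cmat = 1 := Matrix.nonsing_inv_mul _ hdetC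
  have hCinvsym : (Cmat⁻¹)ᵀ = Cmat⁻¹ := by rw [Matrix.transpose_nonsing_inv, hCsym]
  -- combinatorial counting
  set P : Finset (Finset (Fin n)) := Finset.powersetCard p Finset.univ with hPdef
  have hcard1 : ∀ i : Fin n, (P.filter fun J => i ∈ J).card = (n - 1).choose (p - 1) := by
    intro i
    have heq : (P.filter fun J => i ∈ J) = P.filter (fun J => {i} ⊆ J) := by
      apply Finset.filter_congr
      intro J _
      simp [Finset.singleton_subset_iff]
    have h2 := card_subsets_containing (n := n) p {i} (by simpa using hp.le)
    rw [Finset.card_singleton] at h2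
    rw [heq, hPdef]
    exact h2
  have hcard2 : ∀ i k : Fin n, i ≠ k →
      (P.filter fun J => i ∈ J ∧ k ∈ J).card = (n - 2).choose (p - 2) := by
    intro i k hik
    have hij2 : ({i, k} : Finset (Fin n)).card = 2 := by
      rw [Finset.card_insert_of_notMem (by simp [hik]), Finset.card_singleton]
    have heq : (P.filter fun J => i ∈ J ∧ k ∈ J)
        = P.filter (fun J => ({i, k} : Finset (Fin n)) ⊆ J) := by
      apply Finset.filter_congr
      intro J _
      simp [Finset.insert_subset_iff, Finset.singleton_subset_iff]
    have h2 := card_subsets_containing (n := n) p {i, k} (by rw [hij2]; exact hp)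
    rw [hij2] at h2
    rw [heq, hPdef]
    exact h2
  -- the two sums
  have hS1 : ∑ J ∈ P, Matrix.diagonal (fun i => if i ∈ J then (1 : ℝ) else 0)
      = (((n - 1).choose (p - 1) : ℕ) : ℝ) • (1 : Matrix (Fin n) (Fin n) ℝ) := by
    ext i k
    rw [Matrix.sum_apply]
    rcases eq_or_ne i k with hik | hik
    · subst hik
      simp only [Matrix.diagonal_apply_eq, Matrix.smul_apply, Matrix.one_apply_eq,
        smul_eq_mul, mul_one]
      rw [Finset.sum_boole, hcard1 i]
    · simp [Matrix.diagonal_apply_ne _ hik, Matrix.one_apply_ne hik]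
  have hS2 : ∑ J ∈ P, Matrix.diagonal (fun x => if x ∈ J then (1 : ℝ) else 0) * A
        * Matrix.diagonal (fun x => if x ∈ J then (1 : ℝ) else 0)
      = (((n - 2).choose (p - 2) : ℕ) : ℝ) • A
        + ((((n - 1).choose (p - 1) : ℕ) : ℝ) - (((n - 2).choose (p - 2) : ℕ) : ℝ))
            • Matrix.diagonal A.diag := by
    ext i k
    rw [Matrix.sum_apply]
    have hterm : ∀ J : Finset (Fin n),
        (Matrix.diagonal (fun x => if x ∈ J then (1 : ℝ) else 0) * A
          * Matrix.diagonal (fun x => if x ∈ J then (1 : ℝ) else 0)) i k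
        = (if i ∈ J ∧ k ∈ J then (1 : ℝ) else 0) * A i k := by
      intro J
      rw [Matrix.mul_diagonal, Matrix.diagonal_mul]
      by_cases h1 : i ∈ J <;> by_cases h2 : k ∈ J <;> simp [h1, h2]
    rw [Finset.sum_congr rfl (fun J _ => hterm J), ← Finset.sum_mul, Finset.sum_boole]
    rcases eq_or_ne i k with hik | hik
    · subst hik
      have heq : (P.filter fun J => i ∈ J ∧ i ∈ J) = P.filter (fun J => i ∈ J) := by
        apply Finset.filter_congr
        intro J _
        simp
      rw [heq, hcard1 i]
      simp only [Matrix.add_apply, Matrix.smul_apply, Matrix.diagonal_apply_eq,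
        Matrix.diag_apply, smul_eq_mul]
      ring
    · rw [hcard2 i k hik]
      simp only [Matrix.add_apply, Matrix.smul_apply, Matrix.diagonal_apply_ne _ hik,
        smul_eq_mul, mul_zero, add_zero]
  -- choose identities
  have hchoose1 : n * (n - 1).choose (p - 1) = n.choose p * p := by
    have h := Nat.add_one_mul_choose_eq (n - 1) (p - 1)
    rw [show n - 1 + 1 = n by omega, show p - 1 + 1 = p by omega] at h
    exact h
  have hchoose2 : (n - 1) * (n - 2).choose (p - 2) = (n - 1).choose (p - 1) * (p - 1) := by
    have h := Nat.add_one_mul_choose_eq (n - 2) (p - 2)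
    rw [show n - 2 + 1 = n - 1 by omega, show p - 2 + 1 = p - 1 by omega] at h
    exact h
  have hcastn : (((n - 1) : ℕ) : ℝ) = (n : ℝ) - 1 := by
    rw [Nat.cast_sub (by omega)]
    simp
  have hcastp : (((p - 1) : ℕ) : ℝ) = (p : ℝ) - 1 := by
    rw [Nat.cast_sub (by omega)]
    simp
  have hprod1 : (n : ℝ) * (((n - 1).choose (p - 1) : ℕ) : ℝ)
      = ((n.choose p : ℕ) : ℝ) * p := by
    exact_mod_cast congrArg (Nat.cast (R := ℝ)) hchoose1
  have hprod2 : ((n : ℝ) - 1) * (((n - 2).choose (p - 2) : ℕ) : ℝ)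
      = (((n - 1).choose (p - 1) : ℕ) : ℝ) * ((p : ℝ) - 1) := by
    have h := congrArg (Nat.cast (R := ℝ)) hchoose2
    push_cast at h
    rwa [hcastn, hcastp] at h
  have hNpos : 0 < n.choose p := Nat.choose_pos hpn.le
  have hNne : ((n.choose p : ℕ) : ℝ) ≠ 0 := by
    exact_mod_cast hNpos.ne'
  have hR1 : ((n.choose p : ℕ) : ℝ)⁻¹ * (((n - 1).choose (p - 1) : ℕ) : ℝ)
      = (p : ℝ) / n := by
    field_simp
    linarith [hprod1]
  -- selectors and diagonal indicators
  have hsel : ∀ J ∈ P, selector p J * (selector p J)ᵀ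
      = Matrix.diagonal (fun i => if i ∈ J then (1 : ℝ) else 0) := by
    intro J hJ
    exact selector_mul_transpose J (Finset.mem_powersetCard_univ.mp (hPdef ▸ hJ))
  -- the three expectation computations
  have E1 : ∑ J ∈ P, B * selector p J * ((selector p J)ᵀ * B⁻¹ * Cmat⁻¹)
      = (((n - 1).choose (p - 1) : ℕ) : ℝ) • Cmat⁻¹ := by
    have hstep : ∀ J ∈ P, B * selector p J * ((selector p J)ᵀ * B⁻¹ * Cmat⁻¹)
        = B * Matrix.diagonal (fun i => if i ∈ J then (1 : ℝ) else 0) * (B⁻¹ * Cmat⁻¹) := by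
      intro J hJ
      calc B * selector p J * ((selector p J)ᵀ * B⁻¹ * Cmat⁻¹)
          = B * (selector p J * (selector p J)ᵀ) * (B⁻¹ * Cmat⁻¹) := by
            simp only [Matrix.mul_assoc]
      _ = B * Matrix.diagonal (fun i => if i ∈ J then (1 : ℝ) else 0) * (B⁻¹ * Cmat⁻¹) := by
            rw [hsel J hJ]
    rw [Finset.sum_congr rfl hstep, ← Finset.sum_mul, ← Finset.mul_sum, hS1, mul_smul_comm,
      Matrix.mul_one, smul_mul_assoc, ← Matrix.mul_assoc B B⁻¹ (Cmat⁻¹), hBinv1, Matrix.one_mul]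
  have E2 : ∑ J ∈ P, (B * selector p J * ((selector p J)ᵀ * B⁻¹ * Cmat⁻¹))ᵀ
      = (((n - 1).choose (p - 1) : ℕ) : ℝ) • Cmat⁻¹ := by
    rw [← Matrix.transpose_sum, E1, Matrix.transpose_smul, hCinvsym]
  have E3 : ∑ J ∈ P, ((selector p J)ᵀ * B⁻¹ * Cmat⁻¹)ᵀ
        * ((B * selector p J)ᵀ * (B * selector p J)) * ((selector p J)ᵀ * B⁻¹ * Cmat⁻¹)
      = (((n - 1).choose (p - 1) : ℕ) : ℝ) • Cmat⁻¹ := by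
    have hstep : ∀ J ∈ P, ((selector p J)ᵀ * B⁻¹ * Cmat⁻¹)ᵀ
          * ((B * selector p J)ᵀ * (B * selector p J)) * ((selector p J)ᵀ * B⁻¹ * Cmat⁻¹)
        = (Cmat⁻¹ * B⁻¹)
            * (Matrix.diagonal (fun x => if x ∈ J then (1 : ℝ) else 0) * A
              * Matrix.diagonal (fun x => if x ∈ J then (1 : ℝ) else 0))
            * (B⁻¹ * Cmat⁻¹) := by
      intro J hJ
      calc ((selector p J)ᵀ * B⁻¹ * Cmat⁻¹)ᵀ
            * ((B * selector p J)ᵀ * (B * selector p J)) * ((selector p J)ᵀ * B⁻¹ * Cmat⁻¹)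
          = Cmat⁻¹ * (B⁻¹ * (selector p J * ((selector p J)ᵀ
              * (B * (B * (selector p J * ((selector p J)ᵀ * (B⁻¹ * Cmat⁻¹)))))))) := by
            simp only [Matrix.transpose_mul, Matrix.transpose_transpose, hBsym, hBinvsym,
              hCinvsym, Matrix.mul_assoc]
      _ = Cmat⁻¹ * (B⁻¹ * (selector p J * ((selector p J)ᵀ
              * (A * (selector p J * ((selector p J)ᵀ * (B⁻¹ * Cmat⁻¹))))))) := by
            rw [← Matrix.mul_assoc B B (selector p J * ((selector p J)ᵀ * (B⁻¹ * Cmat⁻¹))), hBB]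
      _ = (Cmat⁻¹ * B⁻¹)
            * ((selector p J * (selector p J)ᵀ) * A * (selector p J * (selector p J)ᵀ))
            * (B⁻¹ * Cmat⁻¹) := by
            simp only [Matrix.mul_assoc]
      _ = (Cmat⁻¹ * B⁻¹)
            * (Matrix.diagonal (fun x => if x ∈ J then (1 : ℝ) else 0) * A
              * Matrix.diagonal (fun x => if x ∈ J then (1 : ℝ) else 0))
            * (B⁻¹ * Cmat⁻¹) := by
            rw [hsel J hJ]
    rw [Finset.sum_congr rfl hstep, ← Finset.sum_mul, ← Finset.mul_sum, hS2]
    -- now compute (C⁻¹B⁻¹)(ac2 • A + (ac1 − ac2) • Dg)(B⁻¹C⁻¹)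
    have h5 : (Cmat⁻¹ * B⁻¹) * A * (B⁻¹ * Cmat⁻¹) = Cmat⁻¹ * Cmat⁻¹ := by
      calc (Cmat⁻¹ * B⁻¹) * A * (B⁻¹ * Cmat⁻¹)
          = Cmat⁻¹ * (B⁻¹ * (B * (B * (B⁻¹ * Cmat⁻¹)))) := by
            rw [← hBB]
            simp only [Matrix.mul_assoc]
      _ = Cmat⁻¹ * (B⁻¹ * (B * Cmat⁻¹)) := by
            rw [← Matrix.mul_assoc B B⁻¹ (Cmat⁻¹), hBinv1, Matrix.one_mul]
      _ = Cmat⁻¹ * ((B⁻¹ * B) * Cmat⁻¹) := by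
            rw [← Matrix.mul_assoc B⁻¹ B (Cmat⁻¹)]
      _ = Cmat⁻¹ * Cmat⁻¹ := by rw [hBinv2, Matrix.one_mul]
    have h6 : (Cmat⁻¹ * B⁻¹) * Matrix.diagonal A.diag * (B⁻¹ * Cmat⁻¹)
        = Cmat⁻¹ * M0 * Cmat⁻¹ := by
      rw [hM0def]
      simp only [Matrix.mul_assoc]
    have e1 : (((n - 2).choose (p - 2) : ℕ) : ℝ)
        = (((n - 1).choose (p - 1) : ℕ) : ℝ) * c1 := by
      rw [hc1def, ← mul_div_assoc, eq_div_iff (show ((n : ℝ) - 1) ≠ 0 by linarith)]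
      linarith [hprod2]
    have hCsq : Cmat⁻¹ = c1 • (Cmat⁻¹ * Cmat⁻¹) + (1 - c1) • (Cmat⁻¹ * M0 * Cmat⁻¹) := by
      calc Cmat⁻¹ = Cmat⁻¹ * Cmat * Cmat⁻¹ := by rw [hCinv2, Matrix.one_mul]
      _ = Cmat⁻¹ * (c1 • 1 + (1 - c1) • M0) * Cmat⁻¹ := by nth_rw 2 [hCdef]
      _ = c1 • (Cmat⁻¹ * Cmat⁻¹) + (1 - c1) • (Cmat⁻¹ * M0 * Cmat⁻¹) := by
          rw [Matrix.mul_add, Matrix.add_mul, mul_smul_comm, Matrix.mul_one, smul_mul_assoc,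
            mul_smul_comm, smul_mul_assoc]
    rw [Matrix.mul_add, Matrix.add_mul, mul_smul_comm, smul_mul_assoc, h5,
      mul_smul_comm, smul_mul_assoc, h6, e1,
      show (((n - 1).choose (p - 1) : ℕ) : ℝ) - (((n - 1).choose (p - 1) : ℕ) : ℝ) * c1
          = (((n - 1).choose (p - 1) : ℕ) : ℝ) * (1 - c1) from by ring]
    calc ((((n - 1).choose (p - 1) : ℕ) : ℝ) * c1) • (Cmat⁻¹ * Cmat⁻¹)
          + ((((n - 1).choose (p - 1) : ℕ) : ℝ) * (1 - c1)) • (Cmat⁻¹ * M0 * Cmat⁻¹)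
        = (((n - 1).choose (p - 1) : ℕ) : ℝ) • (c1 • (Cmat⁻¹ * Cmat⁻¹)
            + (1 - c1) • (Cmat⁻¹ * M0 * Cmat⁻¹)) := by
          rw [smul_add, smul_smul, smul_smul]
    _ = (((n - 1).choose (p - 1) : ℕ) : ℝ) • Cmat⁻¹ := by rw [← hCsq]
  -- put everything together
  have hX : ∀ J ∈ P, (proj (B * selector p J)
      - (B * selector p J * ((selector p J)ᵀ * B⁻¹ * Cmat⁻¹)
        + (B * selector p J * ((selector p J)ᵀ * B⁻¹ * Cmat⁻¹))ᵀ
        - ((selector p J)ᵀ * B⁻¹ * Cmat⁻¹)ᵀ * ((B * selector p J)ᵀ * (B * selector p J))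
          * ((selector p J)ᵀ * B⁻¹ * Cmat⁻¹))).PosSemidef :=
    fun J _ => proj_sub_posSemidef (B * selector p J) ((selector p J)ᵀ * B⁻¹ * Cmat⁻¹)
  have hsum : ∑ J ∈ P, (proj (B * selector p J)
      - (B * selector p J * ((selector p J)ᵀ * B⁻¹ * Cmat⁻¹)
        + (B * selector p J * ((selector p J)ᵀ * B⁻¹ * Cmat⁻¹))ᵀ
        - ((selector p J)ᵀ * B⁻¹ * Cmat⁻¹)ᵀ * ((B * selector p J)ᵀ * (B * selector p J))
          * ((selector p J)ᵀ * B⁻¹ * Cmat⁻¹)))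
      = (∑ J ∈ P, proj (B * selector p J))
        - (((n - 1).choose (p - 1) : ℕ) : ℝ) • Cmat⁻¹ := by
    rw [Finset.sum_sub_distrib, Finset.sum_sub_distrib, Finset.sum_add_distrib, E1, E2, E3]
    abel
  have hfinal : ((n.choose p : ℝ))⁻¹ • (∑ J ∈ P, proj (B * selector p J))
        - ((p : ℝ) / n) • Cmat⁻¹
      = ((n.choose p : ℝ))⁻¹ • ∑ J ∈ P, (proj (B * selector p J)
        - (B * selector p J * ((selector p J)ᵀ * B⁻¹ * Cmat⁻¹)
          + (B * selector p J * ((selector p J)ᵀ * B⁻¹ * Cmat⁻¹))ᵀ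
          - ((selector p J)ᵀ * B⁻¹ * Cmat⁻¹)ᵀ * ((B * selector p J)ᵀ * (B * selector p J))
            * ((selector p J)ᵀ * B⁻¹ * Cmat⁻¹))) := by
    rw [hsum, smul_sub, smul_smul, hR1]
  have key := posSemidef_smul (posSemidef_sum P _ hX) (c := ((n.choose p : ℝ))⁻¹) (by positivity)
  rw [← hfinal] at key
  exact key

end
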